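/- Define ε(d,k) as the minimum positive distance d(P,Q) over all pairs of disjoint polytopes P, Q that are convex hulls of finite subsets of {0,1,…,k}^d. Then ε(2,k) = 1/√((k−1)² + k²) for every integer k ≥ 2. -/

import Mathlib

/-- The infimum of Euclidean distances between points of two sets. -/
noncomputable def setDist {E : Type*} [PseudoMetricSpace E] (P Q : Set E) : ℝ :=
  sInf (Set.image2 dist P Q)

/-- A finite set of vertices with integer coordinates in `[0, k]`. -/
def IsLatticeVertexSet (d k : ℕ) (V : Finset (EuclideanSpace ℝ (Fin d))) : Prop :=
  ∀ p ∈ V, ∀ i, ∃ n : ℕ, n ≤ k ∧ p i = (n : ℝ)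

/-- The smallest distance between two disjoint lattice `(d,k)`-polytopes. -/
noncomputable def eps (d k : ℕ) : ℝ :=
  sInf {r : ℝ | ∃ V W : Finset (EuclideanSpace ℝ (Fin d)),
    V.Nonempty ∧ W.Nonempty ∧ IsLatticeVertexSet d k V ∧ IsLatticeVertexSet d k W ∧
    Disjoint (convexHull ℝ (V : Set (EuclideanSpace ℝ (Fin d))))
      (convexHull ℝ (W : Set (EuclideanSpace ℝ (Fin d)))) ∧
    r = setDist (convexHull ℝ (V : Set (EuclideanSpace ℝ (Fin d))))
      (convexHull ℝ (W : Set (EuclideanSpace ℝ (Fin d))))}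

open RealInnerProductSpace

lemma varineq {E : Type*} [NormedAddCommGroup E] [InnerProductSpace ℝ E] {P : Set E}
    (hP : Convex ℝ P) {p q x : E} (hp : p ∈ P) (hx : x ∈ P)
    (hmin : ∀ y ∈ P, dist q p ≤ dist q y) : ⟪q - p, x - p⟫ ≤ 0 := by
  by_contra h
  push_neg at h
  have hxp : x - p ≠ 0 := by
    intro h0; rw [h0, inner_zero_right] at h; exact lt_irrefl 0 h
  have hn : (0:ℝ) < ‖x - p‖^2 := by
    have := norm_pos_iff.2 hxp; positivity
  set ι := ⟪q - p, x - p⟫ with hι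
  set t := min 1 (ι / ‖x - p‖^2) with ht
  have ht0 : 0 < t := lt_min one_pos (div_pos h hn)
  have ht1 : t ≤ 1 := min_le_left _ _
  have hy : p + t • (x - p) ∈ P := by
    have := hP hp hx (by linarith : (0:ℝ) ≤ 1 - t) (le_of_lt ht0) (by ring)
    convert this using 1
    module
  have hd := hmin _ hy
  have hd2 : dist q p ^2 ≤ dist q (p + t • (x - p)) ^2 := by
    apply sq_le_sq' _ hd; linarith [dist_nonneg (x := q) (y := p)]
  have hexp : dist q (p + t • (x - p)) ^ 2
      = dist q p ^2 - 2 * (t * ι) + t^2 * ‖x - p‖^2 := by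
    rw [dist_eq_norm, show q - (p + t • (x - p)) = (q - p) - t • (x - p) by abel,
      norm_sub_sq_real, real_inner_smul_right, norm_smul, Real.norm_eq_abs,
      abs_of_pos ht0, dist_eq_norm]
    ring
  rw [hexp] at hd2
  have h3 : t * ‖x-p‖^2 ≤ ι := by
    have h4 : t ≤ ι / ‖x-p‖^2 := min_le_right _ _
    calc t * ‖x-p‖^2 ≤ (ι / ‖x-p‖^2) * ‖x-p‖^2 := by nlinarith
    _ = ι := by field_simp
  nlinarith


lemma argmax_lemma {E : Type*} [NormedAddCommGroup E] [InnerProductSpace ℝ E]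
    (s : Finset E) (v0 : E) (c : ℝ) (hle : ∀ x ∈ s, ⟪v0, x⟫ ≤ c)
    {p : E} (hp : p ∈ convexHull ℝ (s : Set E)) (hpc : ⟪v0, p⟫ = c) :
    p ∈ convexHull ℝ ({x ∈ s | ⟪v0, x⟫ = c} : Set E) := by
  classical
  rw [Finset.convexHull_eq] at hp
  obtain ⟨w, hw0, hw1, hwp⟩ := hp
  have hcm : s.centerMass w id = ∑ y ∈ s, w y • y := by
    rw [Finset.centerMass, hw1, inv_one, one_smul]; rfl
  have hinner : ∑ y ∈ s, w y * ⟪v0, y⟫ = c := by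
    have h5 : ⟪v0, ∑ y ∈ s, w y • y⟫ = ∑ y ∈ s, w y * ⟪v0, y⟫ := by
      rw [inner_sum]; exact Finset.sum_congr rfl fun y _ => real_inner_smul_right _ _ _
    rw [← h5, ← hcm, hwp, hpc]
  have hzero : ∀ y ∈ s, w y * (c - ⟪v0, y⟫) = 0 := by
    intro y hy
    have hsum : ∑ y ∈ s, w y * (c - ⟪v0, y⟫) = 0 := by
      have h6 : ∑ y ∈ s, w y * (c - ⟪v0, y⟫)
          = c * (∑ y ∈ s, w y) - ∑ y ∈ s, w y * ⟪v0, y⟫ := by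
        rw [Finset.mul_sum, ← Finset.sum_sub_distrib]
        exact Finset.sum_congr rfl fun y _ => by ring
      rw [h6, hw1, hinner]; ring
    exact (Finset.sum_eq_zero_iff_of_nonneg (fun y hy => mul_nonneg (hw0 y hy)
      (by linarith [hle y hy]))).1 hsum y hy
  have hdic : ∀ y ∈ s, w y ≠ 0 → ⟪v0, y⟫ = c := by
    intro y hy hwy
    rcases mul_eq_zero.1 (hzero y hy) with h | h
    · exact absurd h hwy
    · linarith
  set t := s.filter (fun x => ⟪v0, x⟫ = c) with htdef
  have hsub : ∀ x ∈ t, x ∈ ({x ∈ s | ⟪v0, x⟫ = c} : Set E) := by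
    intro x hx
    rcases Finset.mem_filter.1 hx with ⟨h1, h2⟩
    exact ⟨h1, h2⟩
  have hws : ∑ y ∈ t, w y = 1 := by
    rw [htdef, Finset.sum_filter_of_ne (fun x hx hne => hdic x hx hne), hw1]
  have hcmt : t.centerMass w id = p := by
    rw [Finset.centerMass, hws, inv_one, one_smul, ← hwp, hcm]
    exact Finset.sum_filter_of_ne (fun x hx hne => hdic x hx (by
      intro h0; rw [h0, zero_smul] at hne; exact hne rfl))
  rw [← hcmt]
  exact Finset.centerMass_mem_convexHull t (fun i hi => hw0 i (Finset.mem_filter.1 hi).1)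
    (by rw [hws]; norm_num) hsub


lemma inner2 (v w : EuclideanSpace ℝ (Fin 2)) : ⟪v, w⟫ = v 0 * w 0 + v 1 * w 1 := by
  simp [PiLp.inner_apply, Fin.sum_univ_two]; ring

lemma normsq2 (v : EuclideanSpace ℝ (Fin 2)) : ‖v‖^2 = v 0 ^2 + v 1 ^2 := by
  rw [← real_inner_self_eq_norm_sq, inner2]; ring

lemma det_identity (v w z : EuclideanSpace ℝ (Fin 2)) (hC : ⟪v, w⟫ = 0) :
    ⟪v, z⟫^2 * ‖w‖^2 = ‖v‖^2 * (w 0 * z 1 - w 1 * z 0)^2 := by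
  rw [inner2] at hC
  rw [inner2, normsq2, normsq2]
  set v0 := v 0; set v1 := v 1; set w0 := w 0; set w1 := w 1; set z0 := z 0; set z1 := z 1
  linear_combination (v1*w1*z1^2 - v1*w1*z0^2 + 2*v1*w0*z0*z1 + 2*v0*w1*z0*z1
    - v0*w0*z1^2 + v0*w0*z0^2) * hC

set_option maxHeartbeats 1000000 in
lemma case2 {k : ℕ} (hk : 2 ≤ k) (v w z : EuclideanSpace ℝ (Fin 2))
    (hvw : ⟪v, w⟫ = 0) (hvz : ⟪v, z⟫ = ‖v‖^2) (hv : 0 < ‖v‖) (hw : w ≠ 0)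
    (m0 m1 n0 n1 : ℤ) (hw0 : w 0 = m0) (hw1 : w 1 = m1) (hz0 : z 0 = n0) (hz1 : z 1 = n1)
    (hm0 : m0.natAbs ≤ k) (hm1 : m1.natAbs ≤ k) :
    1 / Real.sqrt (((k:ℝ)-1)^2 + (k:ℝ)^2) ≤ ‖v‖ := by
  have hk2 : (2:ℝ) ≤ (k:ℝ) := by exact_mod_cast hk
  have hN2 : (2:ℝ) ≤ ((k:ℝ)-1)^2 + (k:ℝ)^2 := by nlinarith
  have hN0 : (0:ℝ) < ((k:ℝ)-1)^2 + (k:ℝ)^2 := by linarith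
  have hsN : 0 < Real.sqrt (((k:ℝ)-1)^2 + (k:ℝ)^2) := Real.sqrt_pos.2 hN0
  have hsNsq : Real.sqrt (((k:ℝ)-1)^2 + (k:ℝ)^2) ^ 2 = ((k:ℝ)-1)^2 + (k:ℝ)^2 :=
    Real.sq_sqrt hN0.le
  have hwpos : 0 < ‖w‖ := norm_pos_iff.2 hw
  have hdet : w 0 * z 1 - w 1 * z 0 = ((m0 * n1 - m1 * n0 : ℤ) : ℝ) := by
    rw [hw0, hw1, hz0, hz1]; push_cast; ring
  have hkey : ‖v‖^2 * ‖w‖^2 = ((m0 * n1 - m1 * n0 : ℤ) : ℝ)^2 := by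
    have h1 := det_identity v w z hvw
    rw [hvz, hdet] at h1
    have h3 : ‖v‖^2 * (‖v‖^2 * ‖w‖^2) = ‖v‖^2 * ((m0 * n1 - m1 * n0 : ℤ) : ℝ)^2 := by
      linear_combination h1
    exact mul_left_cancel₀ (by positivity) h3
  have hwsq : ‖w‖^2 = (m0:ℝ)^2 + (m1:ℝ)^2 := by rw [normsq2, hw0, hw1]
  have hDne : (m0 * n1 - m1 * n0 : ℤ) ≠ 0 := by
    intro h0
    rw [h0] at hkey
    push_cast at hkey
    nlinarith [hkey, mul_pos (mul_pos hv hv) (mul_pos hwpos hwpos)]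
  have hD1 : (1:ℝ) ≤ |((m0 * n1 - m1 * n0 : ℤ) : ℝ)| := by
    rw [← Int.cast_abs]; exact_mod_cast Int.one_le_abs hDne
  have hprod : ‖v‖ * ‖w‖ = |((m0 * n1 - m1 * n0 : ℤ) : ℝ)| := by
    have h4 : (‖v‖ * ‖w‖)^2 = ((m0 * n1 - m1 * n0 : ℤ) : ℝ)^2 := by rw [mul_pow]; exact hkey
    calc ‖v‖ * ‖w‖ = Real.sqrt ((‖v‖ * ‖w‖)^2) := (Real.sqrt_sq (by positivity)).symm
      _ = Real.sqrt (((m0 * n1 - m1 * n0 : ℤ) : ℝ)^2) := by rw [h4]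
      _ = _ := Real.sqrt_sq_eq_abs _
  rw [div_le_iff₀ hsN]
  by_cases hcase : m0.natAbs = m1.natAbs
  · -- |m0| = |m1| case
    have hm0ne : m0 ≠ 0 := by
      intro h0
      apply hw
      have hm1z : m1 = 0 := by omega
      apply PiLp.ext; intro i
      fin_cases i
      · show w 0 = 0; rw [hw0, h0]; simp
      · show w 1 = 0; rw [hw1, hm1z]; simp
    have hc : (0:ℝ) < |(m0:ℝ)| := by
      simp only [abs_pos]; exact_mod_cast hm0ne
    have hgeZ : |m0| ≤ |(m0 * n1 - m1 * n0 : ℤ)| := by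
      rcases Int.natAbs_eq_natAbs_iff.1 hcase with h | h
      · have hDeq : m0 * n1 - m1 * n0 = m0 * (n1 - n0) := by rw [← h]; ring
        have h5 : n1 - n0 ≠ 0 := fun h6 => hDne (by rw [hDeq, h6, mul_zero])
        have h6 : (1:ℤ) ≤ |n1 - n0| := Int.one_le_abs h5
        rw [hDeq, abs_mul]
        nlinarith [abs_nonneg m0]
      · have hDeq : m0 * n1 - m1 * n0 = m0 * (n1 + n0) := by rw [h]; ring
        have h5 : n1 + n0 ≠ 0 := fun h6 => hDne (by rw [hDeq, h6, mul_zero])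
        have h6 : (1:ℤ) ≤ |n1 + n0| := Int.one_le_abs h5
        rw [hDeq, abs_mul]
        nlinarith [abs_nonneg m0]
    have hDge : |(m0:ℝ)| ≤ |((m0 * n1 - m1 * n0 : ℤ) : ℝ)| := by
      rw [← Int.cast_abs, ← Int.cast_abs]; exact_mod_cast hgeZ
    have hwsq2 : ‖w‖^2 = 2 * |(m0:ℝ)|^2 := by
      rw [hwsq, sq_abs]
      have h7 : (m1:ℝ)^2 = (m0:ℝ)^2 := by
        have h7' : m1^2 = m0^2 := by
          rcases Int.natAbs_eq_natAbs_iff.1 hcase with h | h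
          · rw [h]
          · rw [h]; ring
        exact_mod_cast h7'
      rw [h7]; ring
    have h2δ : 1 ≤ 2 * ‖v‖^2 := by
      have h8 : (‖v‖ * ‖w‖)^2 = |((m0 * n1 - m1 * n0 : ℤ) : ℝ)|^2 := by rw [hprod]
      rw [mul_pow, hwsq2] at h8
      have h9 : |(m0:ℝ)|^2 ≤ |((m0 * n1 - m1 * n0 : ℤ) : ℝ)|^2 := by
        nlinarith [hc.le, hDge]
      nlinarith [h8, h9, mul_pos hc hc]
    have h10 : 1 ≤ (‖v‖ * Real.sqrt (((k:ℝ)-1)^2 + (k:ℝ)^2))^2 := by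
      rw [mul_pow, hsNsq]
      nlinarith [h2δ, sq_nonneg ‖v‖]
    nlinarith [mul_pos hv hsN, h10]
  · -- |m0| ≠ |m1| case
    have hZ : m0^2 + m1^2 ≤ (k:ℤ)^2 + ((k:ℤ)-1)^2 := by
      have e0 : ((m0.natAbs : ℤ))^2 = m0^2 := by
        rw [sq, sq, Int.natAbs_mul_self']
      have e1 : ((m1.natAbs : ℤ))^2 = m1^2 := by
        rw [sq, sq, Int.natAbs_mul_self']
      rw [← e0, ← e1]
      have h0 : (m0.natAbs : ℤ) ≤ k := by exact_mod_cast hm0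
      have h1 : (m1.natAbs : ℤ) ≤ k := by exact_mod_cast hm1
      have h2 : (0:ℤ) ≤ (m0.natAbs : ℤ) := Int.natCast_nonneg _
      have h3 : (0:ℤ) ≤ (m1.natAbs : ℤ) := Int.natCast_nonneg _
      rcases Nat.lt_or_ge m0.natAbs m1.natAbs with h | h
      · have h4 : (m0.natAbs : ℤ) ≤ (k:ℤ) - 1 := by omega
        nlinarith
      · have h5 : m1.natAbs < m0.natAbs := by omega
        have h4 : (m1.natAbs : ℤ) ≤ (k:ℤ) - 1 := by omega
        nlinarith
    have hwle : ‖w‖ ≤ Real.sqrt (((k:ℝ)-1)^2 + (k:ℝ)^2) := by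
      rw [show ‖w‖ = Real.sqrt (‖w‖^2) from (Real.sqrt_sq (norm_nonneg w)).symm]
      apply Real.sqrt_le_sqrt
      rw [hwsq]
      have : (m0:ℝ)^2 + (m1:ℝ)^2 ≤ (k:ℝ)^2 + ((k:ℝ)-1)^2 := by exact_mod_cast hZ
      linarith
    calc (1:ℝ) ≤ ‖v‖ * ‖w‖ := by rw [hprod]; exact hD1
      _ ≤ ‖v‖ * Real.sqrt (((k:ℝ)-1)^2 + (k:ℝ)^2) := by
        exact mul_le_mul_of_nonneg_left hwle hv.le


noncomputable def pt (x y : ℝ) : EuclideanSpace ℝ (Fin 2) := WithLp.toLp 2 ![x, y]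

lemma dist2 (v w : EuclideanSpace ℝ (Fin 2)) :
    dist v w = Real.sqrt ((v 0 - w 0)^2 + (v 1 - w 1)^2) := by
  rw [EuclideanSpace.dist_eq, Fin.sum_univ_two]
  congr 2 <;> rw [Real.dist_eq, sq_abs]

set_option maxHeartbeats 1000000 in
lemma upper_calc {k : ℕ} (hk : 2 ≤ k) :
    ∃ V W : Finset (EuclideanSpace ℝ (Fin 2)),
    V.Nonempty ∧ W.Nonempty ∧
    (∀ p ∈ V, ∀ i, ∃ n : ℕ, n ≤ k ∧ p i = (n : ℝ)) ∧
    (∀ p ∈ W, ∀ i, ∃ n : ℕ, n ≤ k ∧ p i = (n : ℝ)) ∧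
    Disjoint (convexHull ℝ (V : Set (EuclideanSpace ℝ (Fin 2))))
      (convexHull ℝ (W : Set (EuclideanSpace ℝ (Fin 2)))) ∧
    sInf (Set.image2 dist (convexHull ℝ (V : Set (EuclideanSpace ℝ (Fin 2))))
      (convexHull ℝ (W : Set (EuclideanSpace ℝ (Fin 2)))))
      = 1 / Real.sqrt (((k:ℝ)-1)^2 + (k:ℝ)^2) := by
  classical
  have hk2 : (2:ℝ) ≤ (k:ℝ) := by exact_mod_cast hk
  set N : ℝ := ((k:ℝ)-1)^2 + (k:ℝ)^2 with hNdef
  have hN0 : (0:ℝ) < N := by nlinarith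
  have hsN : 0 < Real.sqrt N := Real.sqrt_pos.2 hN0
  set x := pt 1 1 with hxdef
  set b1 := pt 0 0 with hb1def
  set b2 := pt (k:ℝ) ((k:ℝ)-1) with hb2def
  have hx0 : x 0 = 1 := rfl
  have hx1 : x 1 = 1 := rfl
  have hseg : ∀ q ∈ segment ℝ b1 b2, ∃ t : ℝ, 0 ≤ t ∧ t ≤ 1 ∧
      q 0 = t * (k:ℝ) ∧ q 1 = t * ((k:ℝ)-1) := by
    intro q hq
    rw [segment_eq_image'] at hq
    obtain ⟨t, ⟨ht0, ht1⟩, rfl⟩ := hq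
    refine ⟨t, ht0, ht1, ?_, ?_⟩
    · show b1 0 + t * (b2 0 - b1 0) = _
      show (0:ℝ) + t * ((k:ℝ) - 0) = _; ring
    · show b1 1 + t * (b2 1 - b1 1) = _
      show (0:ℝ) + t * (((k:ℝ)-1) - 0) = _; ring
  refine ⟨{x}, {b1, b2}, ⟨x, by simp⟩, ⟨b1, by simp⟩, ?_, ?_, ?_, ?_⟩
  · intro p hp i
    rw [Finset.mem_singleton] at hp
    subst hp
    refine ⟨1, by omega, ?_⟩
    fin_cases i
    · show x 0 = ((1:ℕ):ℝ); rw [hx0]; norm_num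
    · show x 1 = ((1:ℕ):ℝ); rw [hx1]; norm_num
  · intro p hp i
    rcases Finset.mem_insert.1 hp with h | h
    · subst h
      refine ⟨0, by omega, ?_⟩
      fin_cases i
      · show b1 0 = ((0:ℕ):ℝ); show (0:ℝ) = _; norm_num
      · show b1 1 = ((0:ℕ):ℝ); show (0:ℝ) = _; norm_num
    · rw [Finset.mem_singleton] at h
      subst h
      fin_cases i
      · exact ⟨k, le_refl k, rfl⟩
      · refine ⟨k - 1, by omega, ?_⟩
        show ((k:ℝ) - 1) = _
        have h1 : (1:ℕ) ≤ k := by omega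
        rw [Nat.cast_sub h1]
        norm_num
  · -- disjointness
    rw [Finset.coe_singleton, Finset.coe_insert, Finset.coe_singleton,
      convexHull_singleton, convexHull_pair, Set.disjoint_singleton_left]
    intro hmem
    obtain ⟨t, _, _, h0, h1⟩ := hseg x hmem
    rw [hx0] at h0; rw [hx1] at h1
    have ht : t = 0 := by nlinarith
    rw [ht] at h0; norm_num at h0
  · -- distance value
    rw [Finset.coe_singleton, Finset.coe_insert, Finset.coe_singleton,
      convexHull_singleton, convexHull_pair]
    apply IsLeast.csInf_eq
    constructor
    · set t0 : ℝ := (2*(k:ℝ)-1)/N with ht0def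
      have ht00 : 0 ≤ t0 := by
        apply div_nonneg _ hN0.le; linarith
      have ht01 : t0 ≤ 1 := by
        rw [div_le_one hN0]; nlinarith
      set q0 : EuclideanSpace ℝ (Fin 2) := b1 + t0 • (b2 - b1) with hq0def
      have hq0mem : q0 ∈ segment ℝ b1 b2 := by
        rw [segment_eq_image']
        exact ⟨t0, ⟨ht00, ht01⟩, rfl⟩
      refine ⟨x, rfl, q0, hq0mem, ?_⟩
      have hq00 : q0 0 = t0 * (k:ℝ) := by
        show (0:ℝ) + t0 * ((k:ℝ) - 0) = _; ring
      have hq01 : q0 1 = t0 * ((k:ℝ)-1) := by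
        show (0:ℝ) + t0 * (((k:ℝ)-1) - 0) = _; ring
      rw [dist2, hx0, hx1, hq00, hq01]
      have hE : (1 - t0 * (k:ℝ))^2 + (1 - t0 * ((k:ℝ)-1))^2 = 1/N := by
        rw [ht0def]; field_simp; ring
      rw [hE, one_div, one_div, Real.sqrt_inv]
    · rintro r ⟨a, ha, q, hq, rfl⟩
      rw [Set.mem_singleton_iff] at ha
      subst ha
      obtain ⟨t, _, _, h0, h1⟩ := hseg q hq
      rw [dist2, hx0, hx1, h0, h1]
      rw [show (1:ℝ)/Real.sqrt N = Real.sqrt (1/N) by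
        rw [one_div, one_div, Real.sqrt_inv]]
      apply Real.sqrt_le_sqrt
      rw [div_le_iff₀ hN0, hNdef]
      nlinarith [sq_nonneg ((((k:ℝ)-1)^2 + (k:ℝ)^2) * t - (2*(k:ℝ)-1))]

set_option maxHeartbeats 1000000 in
lemma lower_bound {k : ℕ} (hk : 2 ≤ k)
    (V W : Finset (EuclideanSpace ℝ (Fin 2))) (hVne : V.Nonempty) (hWne : W.Nonempty)
    (hV : ∀ p ∈ V, ∀ i, ∃ n : ℕ, n ≤ k ∧ p i = (n:ℝ))
    (hW : ∀ p ∈ W, ∀ i, ∃ n : ℕ, n ≤ k ∧ p i = (n:ℝ))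
    (hdisj : Disjoint (convexHull ℝ (V : Set (EuclideanSpace ℝ (Fin 2))))
      (convexHull ℝ (W : Set (EuclideanSpace ℝ (Fin 2))))) :
    1 / Real.sqrt (((k:ℝ)-1)^2 + (k:ℝ)^2) ≤
      sInf (Set.image2 dist (convexHull ℝ (V : Set (EuclideanSpace ℝ (Fin 2))))
        (convexHull ℝ (W : Set (EuclideanSpace ℝ (Fin 2))))) := by
  classical
  set P := convexHull ℝ (V : Set (EuclideanSpace ℝ (Fin 2))) with hPdef
  set Q := convexHull ℝ (W : Set (EuclideanSpace ℝ (Fin 2))) with hQdef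
  have hPc : IsCompact P := V.finite_toSet.isCompact_convexHull ℝ
  have hQc : IsCompact Q := W.finite_toSet.isCompact_convexHull ℝ
  have hPconv : Convex ℝ P := convex_convexHull ℝ _
  have hQconv : Convex ℝ Q := convex_convexHull ℝ _
  obtain ⟨v0, hv0⟩ := hVne
  obtain ⟨w0, hw0'⟩ := hWne
  have hPne : P.Nonempty := ⟨v0, subset_convexHull ℝ _ (Finset.mem_coe.2 hv0)⟩
  have hQne : Q.Nonempty := ⟨w0, subset_convexHull ℝ _ (Finset.mem_coe.2 hw0')⟩
  obtain ⟨⟨p, q⟩, hpq, hmin⟩ := (hPc.prod hQc).exists_isMinOn (hPne.prod hQne)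
    (continuous_dist.continuousOn :
      ContinuousOn (fun z : EuclideanSpace ℝ (Fin 2) × EuclideanSpace ℝ (Fin 2) => dist z.1 z.2) _)
  obtain ⟨hp, hq⟩ := hpq
  have hminle : ∀ x ∈ P, ∀ y ∈ Q, dist p q ≤ dist x y := by
    intro x hx y hy
    exact isMinOn_iff.1 hmin (x, y) ⟨hx, hy⟩
  have hsInf : sInf (Set.image2 dist P Q) = dist p q := by
    apply IsLeast.csInf_eq
    constructor
    · exact Set.mem_image2_of_mem hp hq
    · rintro r ⟨a, ha, b, hb, rfl⟩
      exact hminle a ha b hb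
  rw [hsInf]
  have hne : p ≠ q := by
    intro h
    exact Set.disjoint_left.1 hdisj hp (h ▸ hq)
  have hδ : 0 < dist p q := dist_pos.2 hne
  have hvnorm : ‖q - p‖ = dist p q := by rw [dist_eq_norm, norm_sub_rev]
  have hδn : 0 < ‖q - p‖ := by rw [hvnorm]; exact hδ
  -- variational inequalities
  have hPvar : ∀ x ∈ P, ⟪q - p, x - p⟫ ≤ 0 := by
    intro x hx
    exact varineq hPconv hp hx (fun y hy => by
      rw [dist_comm q p, dist_comm q y]
      exact hminle y hy q hq)
  have hQvar : ∀ y ∈ Q, ⟪p - q, y - q⟫ ≤ 0 := by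
    intro y hy
    exact varineq hQconv hq hy (fun x hx => hminle p hp x hx)
  -- support values
  have hPle : ∀ x ∈ P, ⟪q - p, x⟫ ≤ ⟪q - p, p⟫ := by
    intro x hx
    have := hPvar x hx
    rw [inner_sub_right] at this
    linarith
  have hQge : ∀ y ∈ Q, ⟪q - p, q⟫ ≤ ⟪q - p, y⟫ := by
    intro y hy
    have := hQvar y hy
    rw [show p - q = -(q - p) by abel, inner_neg_left, inner_sub_right] at this
    linarith
  have hlin : IsLinearMap ℝ (fun x : EuclideanSpace ℝ (Fin 2) => ⟪q - p, x⟫) :=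
    ⟨fun a b => inner_add_right _ _ _, fun c y => real_inner_smul_right _ _ _⟩
  obtain ⟨a, haV, hamax⟩ := V.exists_max_image (fun x => ⟪q - p, x⟫) ⟨v0, hv0⟩
  obtain ⟨b, hbW, hbmin⟩ := W.exists_min_image (fun x => ⟪q - p, x⟫) ⟨w0, hw0'⟩
  have haP : a ∈ P := subset_convexHull ℝ _ (Finset.mem_coe.2 haV)
  have hbQ : b ∈ Q := subset_convexHull ℝ _ (Finset.mem_coe.2 hbW)
  have hfa : ⟪q - p, a⟫ = ⟪q - p, p⟫ := by
    refine le_antisymm (hPle a haP) ?_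
    have hsub : P ⊆ {x | ⟪q - p, x⟫ ≤ ⟪q - p, a⟫} :=
      convexHull_min (fun x hx => hamax x (Finset.mem_coe.1 hx)) (convex_halfSpace_le hlin _)
    exact hsub hp
  have hfb : ⟪q - p, b⟫ = ⟪q - p, q⟫ := by
    refine le_antisymm ?_ (hQge b hbQ)
    have hsub : Q ⊆ {x | ⟪q - p, b⟫ ≤ ⟪q - p, x⟫} :=
      convexHull_min (fun x hx => hbmin x (Finset.mem_coe.1 hx)) (convex_halfSpace_ge hlin _)
    exact hsub hq
  have hfba : ⟪q - p, b⟫ - ⟪q - p, a⟫ = ‖q - p‖^2 := by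
    rw [hfa, hfb, ← inner_sub_right, real_inner_self_eq_norm_sq]
  have hfbz : ⟪q - p, b - a⟫ = ‖q - p‖^2 := by
    rw [inner_sub_right]; exact hfba
  -- lattice coordinates
  obtain ⟨A0, hA0k, hA0⟩ := hV a haV 0
  obtain ⟨A1, hA1k, hA1⟩ := hV a haV 1
  obtain ⟨B0, hB0k, hB0⟩ := hW b hbW 0
  obtain ⟨B1, hB1k, hB1⟩ := hW b hbW 1
  rw [← hvnorm]
  by_cases hWex : ∃ b' ∈ W, b' ≠ b ∧ ⟪q - p, b'⟫ = ⟪q - p, b⟫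
  · obtain ⟨b', hb'W, hb'ne, hb'f⟩ := hWex
    obtain ⟨B'0, hB'0k, hB'0⟩ := hW b' hb'W 0
    obtain ⟨B'1, hB'1k, hB'1⟩ := hW b' hb'W 1
    refine case2 hk (q - p) (b' - b) (b - a) ?_ hfbz hδn (sub_ne_zero.2 hb'ne)
      ((B'0:ℤ) - B0) ((B'1:ℤ) - B1) ((B0:ℤ) - A0) ((B1:ℤ) - A1) ?_ ?_ ?_ ?_ ?_ ?_
    · rw [inner_sub_right]; linarith [hb'f]
    · show b' 0 - b 0 = _; rw [hB'0, hB0]; push_cast; ring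
    · show b' 1 - b 1 = _; rw [hB'1, hB1]; push_cast; ring
    · show b 0 - a 0 = _; rw [hB0, hA0]; push_cast; ring
    · show b 1 - a 1 = _; rw [hB1, hA1]; push_cast; ring
    · omega
    · omega
  by_cases hVex : ∃ a' ∈ V, a' ≠ a ∧ ⟪q - p, a'⟫ = ⟪q - p, a⟫
  · obtain ⟨a', ha'V, ha'ne, ha'f⟩ := hVex
    obtain ⟨A'0, hA'0k, hA'0⟩ := hV a' ha'V 0
    obtain ⟨A'1, hA'1k, hA'1⟩ := hV a' ha'V 1
    refine case2 hk (q - p) (a' - a) (b - a) ?_ hfbz hδn (sub_ne_zero.2 ha'ne)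
      ((A'0:ℤ) - A0) ((A'1:ℤ) - A1) ((B0:ℤ) - A0) ((B1:ℤ) - A1) ?_ ?_ ?_ ?_ ?_ ?_
    · rw [inner_sub_right]; linarith [ha'f]
    · show a' 0 - a 0 = _; rw [hA'0, hA0]; push_cast; ring
    · show a' 1 - a 1 = _; rw [hA'1, hA1]; push_cast; ring
    · show b 0 - a 0 = _; rw [hB0, hA0]; push_cast; ring
    · show b 1 - a 1 = _; rw [hB1, hA1]; push_cast; ring
    · omega
    · omega
  -- vertex-vertex case
  push_neg at hWex hVex
  have hpa : p = a := by
    have hmem := argmax_lemma V (q - p) ⟪q - p, p⟫ (fun x hx => hPle x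
      (subset_convexHull ℝ _ (Finset.mem_coe.2 hx))) hp rfl
    have hsub : ({x ∈ V | ⟪q - p, x⟫ = ⟪q - p, p⟫} : Set (EuclideanSpace ℝ (Fin 2))) ⊆ {a} := by
      rintro x ⟨hxV, hxf⟩
      by_contra hxa
      exact hVex x hxV hxa (by rw [hxf, hfa])
    have := convexHull_mono hsub hmem
    rw [convexHull_singleton] at this
    exact this
  have hqb : q = b := by
    have hle2 : ∀ x ∈ W, ⟪p - q, x⟫ ≤ ⟪p - q, q⟫ := by
      intro x hx
      have := hQge x (subset_convexHull ℝ _ (Finset.mem_coe.2 hx))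
      rw [show p - q = -(q - p) by abel, inner_neg_left, inner_neg_left]
      linarith
    have hmem := argmax_lemma W (p - q) ⟪p - q, q⟫ hle2 hq rfl
    have hsub : ({x ∈ W | ⟪p - q, x⟫ = ⟪p - q, q⟫} : Set (EuclideanSpace ℝ (Fin 2))) ⊆ {b} := by
      rintro x ⟨hxW, hxf⟩
      by_contra hxb
      refine hWex x hxW hxb ?_
      have h1 : ⟪q - p, x⟫ = ⟪q - p, q⟫ := by
        rw [show p - q = -(q - p) by abel, inner_neg_left, inner_neg_left] at hxf
        linarith
      rw [h1, hfb]
    have := convexHull_mono hsub hmem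
    rw [convexHull_singleton] at this
    exact this
  -- distance between distinct lattice points is at least 1
  have hab : a ≠ b := fun h => hne (by rw [hpa, hqb, h])
  have habc : A0 ≠ B0 ∨ A1 ≠ B1 := by
    by_contra hcon
    push_neg at hcon
    apply hab
    apply PiLp.ext; intro i
    fin_cases i
    · show a 0 = b 0; rw [hA0, hB0, hcon.1]
    · show a 1 = b 1; rw [hA1, hB1, hcon.2]
  have hd1 : (1:ℝ) ≤ dist a b := by
    rw [dist2]
    have h0 : (0:ℝ) ≤ (a 0 - b 0)^2 := sq_nonneg _
    have h1 : (0:ℝ) ≤ (a 1 - b 1)^2 := sq_nonneg _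
    have hsq : (1:ℝ) ≤ (a 0 - b 0)^2 + (a 1 - b 1)^2 := by
      rcases habc with h | h
      · have : (1:ℝ) ≤ (a 0 - b 0)^2 := by
          rw [hA0, hB0]
          have h2 : ((A0:ℤ) - B0) ≠ 0 := by omega
          have h3 : (1:ℤ) ≤ ((A0:ℤ) - B0)^2 := by nlinarith [Int.one_le_abs h2, abs_nonneg ((A0:ℤ) - B0), sq_abs ((A0:ℤ) - B0)]
          have h4 : ((A0:ℝ)) - B0 = (((A0:ℤ) - B0 : ℤ) : ℝ) := by push_cast; ring
          rw [h4, ← Int.cast_pow]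
          exact_mod_cast h3
        linarith
      · have : (1:ℝ) ≤ (a 1 - b 1)^2 := by
          rw [hA1, hB1]
          have h2 : ((A1:ℤ) - B1) ≠ 0 := by omega
          have h3 : (1:ℤ) ≤ ((A1:ℤ) - B1)^2 := by nlinarith [Int.one_le_abs h2, abs_nonneg ((A1:ℤ) - B1), sq_abs ((A1:ℤ) - B1)]
          have h4 : ((A1:ℝ)) - B1 = (((A1:ℤ) - B1 : ℤ) : ℝ) := by push_cast; ring
          rw [h4, ← Int.cast_pow]
          exact_mod_cast h3
        linarith
    calc (1:ℝ) = Real.sqrt 1 := Real.sqrt_one.symm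
      _ ≤ _ := Real.sqrt_le_sqrt hsq
  have hk2 : (2:ℝ) ≤ (k:ℝ) := by exact_mod_cast hk
  have hN1 : (1:ℝ) ≤ ((k:ℝ)-1)^2 + (k:ℝ)^2 := by nlinarith
  have hsN1 : (1:ℝ) ≤ Real.sqrt (((k:ℝ)-1)^2 + (k:ℝ)^2) := by
    have h := Real.sqrt_le_sqrt hN1
    rwa [Real.sqrt_one] at h
  calc 1 / Real.sqrt (((k:ℝ)-1)^2 + (k:ℝ)^2) ≤ 1 := by
        rw [div_le_one (by linarith)]; exact hsN1
    _ ≤ dist a b := hd1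
    _ = ‖q - p‖ := by rw [hvnorm, hpa, hqb]

theorem stmt_3 (k : ℕ) (hk : 2 ≤ k) :
    eps 2 k = 1 / Real.sqrt (((k : ℝ) - 1) ^ 2 + (k : ℝ) ^ 2) := by
  classical
  have hNpos : (0:ℝ) < ((k:ℝ)-1)^2 + (k:ℝ)^2 := by
    have hk2 : (2:ℝ) ≤ (k:ℝ) := by exact_mod_cast hk
    nlinarith
  obtain ⟨V, W, hVne, hWne, hV, hW, hdisj, hdist⟩ := upper_calc hk
  have hmem : (1 / Real.sqrt (((k:ℝ)-1)^2 + (k:ℝ)^2)) ∈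
      {r : ℝ | ∃ V W : Finset (EuclideanSpace ℝ (Fin 2)),
        V.Nonempty ∧ W.Nonempty ∧ IsLatticeVertexSet 2 k V ∧ IsLatticeVertexSet 2 k W ∧
        Disjoint (convexHull ℝ (V : Set (EuclideanSpace ℝ (Fin 2))))
          (convexHull ℝ (W : Set (EuclideanSpace ℝ (Fin 2)))) ∧
        r = setDist (convexHull ℝ (V : Set (EuclideanSpace ℝ (Fin 2))))
          (convexHull ℝ (W : Set (EuclideanSpace ℝ (Fin 2))))} :=
    ⟨V, W, hVne, hWne, hV, hW, hdisj, hdist.symm⟩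
  apply le_antisymm
  · apply csInf_le _ hmem
    refine ⟨0, ?_⟩
    rintro r ⟨V, W, _, _, _, _, _, rfl⟩
    apply Real.sInf_nonneg
    rintro x ⟨a, _, b, _, rfl⟩
    exact dist_nonneg
  · apply le_csInf ⟨_, hmem⟩
    rintro r ⟨V', W', hVne', hWne', hV', hW', hdisj', rfl⟩
    exact lower_bound hk V' W' hVne' hWne' hV' hW' hdisj'
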